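/- For θ ∈ [0, π/2), define τ₀ = cos(θ/2)e₀ + sin(θ/2)e₁, τ₁ = sin(θ/2)e₀ + cos(θ/2)e₁ in ℂ², and the two-qubit unit vectors Σ'₁ = (1/√2)(e₀ ⊗ τ₀ + e₁ ⊗ τ₁) and Σ'₂ = (1/√2)(e₀ ⊗ τ₁ + e₁ ⊗ τ₀). Then all four partial traces Tr₁ |Σ'₁⟩⟨Σ'₁|, Tr₂ |Σ'₁⟩⟨Σ'₁|, Tr₁ |Σ'₂⟩⟨Σ'₂|, Tr₂ |Σ'₂⟩⟨Σ'₂| are equal to the 2×2 matrix with diagonal entries 1/2 and off-diagonal entries (sin θ)/2, whose eigenvalues are (1 + sin θ)/2 and (1 − sin θ)/2, both strictly positive. Hence Σ'₁ and Σ'₂ mask each other and are both entangled, with equal (nonzero) entanglement entropy, for every θ ∈ [0, π/2). -/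
import Mathlib


open Matrix Kronecker Polynomial ComplexOrder

noncomputable section

/-- Partial trace over the first subsystem of a two-qubit (4×4) matrix. -/
def ptr1 (M : Matrix (Fin 2 × Fin 2) (Fin 2 × Fin 2) ℂ) : Matrix (Fin 2) (Fin 2) ℂ :=
  Matrix.of fun j l => ∑ i, M (i, j) (i, l)

/-- Partial trace over the second subsystem of a two-qubit (4×4) matrix. -/
def ptr2 (M : Matrix (Fin 2 × Fin 2) (Fin 2 × Fin 2) ℂ) : Matrix (Fin 2) (Fin 2) ℂ :=
  Matrix.of fun i k => ∑ j, M (i, j) (k, j)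

/-- Rank-one projection |v⟩⟨v| of a qubit vector. -/
def proj2 (v : Fin 2 → ℂ) : Matrix (Fin 2) (Fin 2) ℂ :=
  Matrix.of fun i j => v i * star (v j)

/-- Rank-one projection |v⟩⟨v| of a two-qubit vector. -/
def proj4 (v : Fin 2 × Fin 2 → ℂ) : Matrix (Fin 2 × Fin 2) (Fin 2 × Fin 2) ℂ :=
  Matrix.of fun p q => v p * star (v q)

/-- Kronecker (tensor) product of two qubit vectors. -/
def tens (a b : Fin 2 → ℂ) : Fin 2 × Fin 2 → ℂ := fun p => a p.1 * b p.2

/-- Unit (normalized) vector. -/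
def UnitVec {α : Type*} [Fintype α] (v : α → ℂ) : Prop := ∑ i, v i * star (v i) = 1

/-- Hermitian inner product of two-qubit vectors. -/
def inner4 (v w : Fin 2 × Fin 2 → ℂ) : ℂ := ∑ p, star (v p) * w p

/-- A 2×2 density matrix: positive semidefinite with unit trace. -/
def IsDensity2 (A : Matrix (Fin 2) (Fin 2) ℂ) : Prop := A.PosSemidef ∧ A.trace = 1

/-- Separability of a two-qubit density matrix: a finite convex combination of
Kronecker products of 2×2 density matrices. -/
def Separable4 (ρ : Matrix (Fin 2 × Fin 2) (Fin 2 × Fin 2) ℂ) : Prop :=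
  ∃ (n : ℕ) (w : Fin n → ℝ) (A B : Fin n → Matrix (Fin 2) (Fin 2) ℂ),
    (∀ i, 0 ≤ w i) ∧ (∑ i, w i = 1) ∧
    (∀ i, IsDensity2 (A i)) ∧ (∀ i, IsDensity2 (B i)) ∧
    ρ = ∑ i, (w i : ℂ) • (A i ⊗ₖ B i)

/-- Standard basis vector e₀ of ℂ². -/
def e₀ : Fin 2 → ℂ := ![1, 0]

/-- Standard basis vector e₁ of ℂ². -/
def e₁ : Fin 2 → ℂ := ![0, 1]

/-- τ₀-type vector: cos(t/2)e₀ + sin(t/2)e₁. -/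
def tau0 (t : ℝ) : Fin 2 → ℂ := ![(Real.cos (t/2) : ℂ), (Real.sin (t/2) : ℂ)]

/-- τ₁-type vector: sin(t/2)e₀ + cos(t/2)e₁. -/
def tau1 (t : ℝ) : Fin 2 → ℂ := ![(Real.sin (t/2) : ℂ), (Real.cos (t/2) : ℂ)]

/-- Σ'₁ = (1/√2)(e₀ ⊗ τ₀ + e₁ ⊗ τ₁). -/
def sig1' (t : ℝ) : Fin 2 × Fin 2 → ℂ :=
  fun q => ((Real.sqrt 2)⁻¹ : ℂ) * (tens e₀ (tau0 t) q + tens e₁ (tau1 t) q)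

/-- Σ'₂ = (1/√2)(e₀ ⊗ τ₁ + e₁ ⊗ τ₀). -/
def sig2' (t : ℝ) : Fin 2 × Fin 2 → ℂ :=
  fun q => ((Real.sqrt 2)⁻¹ : ℂ) * (tens e₀ (tau1 t) q + tens e₁ (tau0 t) q)

/-- The common reduced state: diagonal entries 1/2, off-diagonal entries (sin θ)/2. -/
def redMat (t : ℝ) : Matrix (Fin 2) (Fin 2) ℂ :=
  !![(1/2 : ℂ), ((Real.sin t / 2 : ℝ) : ℂ); ((Real.sin t / 2 : ℝ) : ℂ), (1/2 : ℂ)]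

set_option maxHeartbeats 1000000 in
/-- Σ'₁ and Σ'₂ mask each other — all four partial traces equal the matrix
with diagonal 1/2 and off-diagonal (sin θ)/2, whose eigenvalues (1 ± sin θ)/2 are strictly
positive — and both states are entangled (not product vectors) for every θ ∈ [0, π/2). -/
theorem nonorthogonal_masked_pair_equally_entangled
    (θ : ℝ) (hθ : θ ∈ Set.Ico (0 : ℝ) (Real.pi / 2)) :
    ptr1 (proj4 (sig1' θ)) = redMat θ ∧
    ptr2 (proj4 (sig1' θ)) = redMat θ ∧
    ptr1 (proj4 (sig2' θ)) = redMat θ ∧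
    ptr2 (proj4 (sig2' θ)) = redMat θ ∧
    (redMat θ).charpoly
      = (X - C (((1 + Real.sin θ) / 2 : ℝ) : ℂ)) * (X - C (((1 - Real.sin θ) / 2 : ℝ) : ℂ)) ∧
    0 < (1 + Real.sin θ) / 2 ∧ 0 < (1 - Real.sin θ) / 2 ∧
    (¬ ∃ a b : Fin 2 → ℂ, sig1' θ = tens a b) ∧
    (¬ ∃ a b : Fin 2 → ℂ, sig2' θ = tens a b) := by

  obtain ⟨hθ0, hθ2⟩ := hθ
  have hk2 : ((Real.sqrt 2 : ℂ))⁻¹ * ((Real.sqrt 2 : ℂ))⁻¹ = 1/2 := by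
    rw [← mul_inv, ← Complex.ofReal_mul, Real.mul_self_sqrt (by norm_num)]
    norm_num
  have hpy : (Real.cos (θ/2) : ℂ)^2 + (Real.sin (θ/2) : ℂ)^2 = 1 := by
    exact_mod_cast congrArg (Complex.ofReal) (Real.cos_sq_add_sin_sq (θ/2))
  have hdb : (Real.sin θ : ℂ) = 2 * (Real.sin (θ/2) : ℂ) * (Real.cos (θ/2) : ℂ) := by
    have : Real.sin θ = 2 * Real.sin (θ/2) * Real.cos (θ/2) := by
      rw [← Real.sin_two_mul]; ring_nf
    exact_mod_cast congrArg (Complex.ofReal) this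
  have hcos : 0 < Real.cos θ :=
    Real.cos_pos_of_mem_Ioo ⟨by linarith [Real.pi_pos], hθ2⟩
  have hsin0 : 0 ≤ Real.sin θ :=
    Real.sin_nonneg_of_nonneg_of_le_pi hθ0 (by linarith [Real.pi_pos])
  have hsin1 : Real.sin θ < 1 := by
    nlinarith [Real.sin_sq_add_cos_sq θ, Real.sin_le_one θ]
  have hkne : ((Real.sqrt 2 : ℂ))⁻¹ ≠ 0 := by
    simp only [ne_eq, inv_eq_zero, Complex.ofReal_eq_zero]
    positivity
  have hent : ∀ a b : Fin 2 → ℂ,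
      (a 0 * b 0 = ((Real.sqrt 2 : ℂ))⁻¹ * (Real.cos (θ/2) : ℂ)) →
      (a 0 * b 1 = ((Real.sqrt 2 : ℂ))⁻¹ * (Real.sin (θ/2) : ℂ)) →
      (a 1 * b 0 = ((Real.sqrt 2 : ℂ))⁻¹ * (Real.sin (θ/2) : ℂ)) →
      (a 1 * b 1 = ((Real.sqrt 2 : ℂ))⁻¹ * (Real.cos (θ/2) : ℂ)) → False := by
    intro a b h00 h01 h10 h11
    have hsq : (((Real.sqrt 2 : ℂ))⁻¹ * ((Real.sqrt 2 : ℂ))⁻¹) * ((Real.cos (θ/2) : ℂ)^2)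
        = (((Real.sqrt 2 : ℂ))⁻¹ * ((Real.sqrt 2 : ℂ))⁻¹) * ((Real.sin (θ/2) : ℂ)^2) := by
      calc _ = (a 0 * b 0) * (a 1 * b 1) := by rw [h00, h11]; ring
        _ = (a 0 * b 1) * (a 1 * b 0) := by ring
        _ = _ := by rw [h01, h10]; ring
    have hcs : (Real.cos (θ/2) : ℂ)^2 = (Real.sin (θ/2) : ℂ)^2 :=
      mul_left_cancel₀ (mul_ne_zero hkne hkne) hsq
    have hcsr : Real.cos (θ/2)^2 = Real.sin (θ/2)^2 := by exact_mod_cast hcs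
    have h2 : Real.cos θ = Real.cos (θ/2)^2 - Real.sin (θ/2)^2 := by
      have := Real.cos_two_mul' (θ/2)
      rw [show 2*(θ/2) = θ by ring] at this
      linarith
    rw [hcsr] at h2; simp at h2; linarith
  refine ⟨?_, ?_, ?_, ?_, ?_, by linarith, by linarith, ?_, ?_⟩
  · ext i j
    fin_cases i <;> fin_cases j <;>
      simp [ptr1, proj4, sig1', tens, e₀, e₁, tau0, tau1, redMat, Fin.sum_univ_two,
        Complex.conj_ofReal, Complex.ofReal_div, -Complex.ofReal_cos, -Complex.ofReal_sin] <;>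
      first
        | linear_combination ((Real.cos (θ/2) : ℂ)^2 + (Real.sin (θ/2) : ℂ)^2) * hk2
            + (1/2 : ℂ) * hpy
        | linear_combination (2 * (Real.sin (θ/2) : ℂ) * (Real.cos (θ/2) : ℂ)) * hk2
            - (1/2 : ℂ) * hdb
  · ext i j
    fin_cases i <;> fin_cases j <;>
      simp [ptr2, proj4, sig1', tens, e₀, e₁, tau0, tau1, redMat, Fin.sum_univ_two,
        Complex.conj_ofReal, Complex.ofReal_div, -Complex.ofReal_cos, -Complex.ofReal_sin] <;>
      first
        | linear_combination ((Real.cos (θ/2) : ℂ)^2 + (Real.sin (θ/2) : ℂ)^2) * hk2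
            + (1/2 : ℂ) * hpy
        | linear_combination (2 * (Real.sin (θ/2) : ℂ) * (Real.cos (θ/2) : ℂ)) * hk2
            - (1/2 : ℂ) * hdb
  · ext i j
    fin_cases i <;> fin_cases j <;>
      simp [ptr1, proj4, sig2', tens, e₀, e₁, tau0, tau1, redMat, Fin.sum_univ_two,
        Complex.conj_ofReal, Complex.ofReal_div, -Complex.ofReal_cos, -Complex.ofReal_sin] <;>
      first
        | linear_combination ((Real.cos (θ/2) : ℂ)^2 + (Real.sin (θ/2) : ℂ)^2) * hk2
            + (1/2 : ℂ) * hpy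
        | linear_combination (2 * (Real.sin (θ/2) : ℂ) * (Real.cos (θ/2) : ℂ)) * hk2
            - (1/2 : ℂ) * hdb
  · ext i j
    fin_cases i <;> fin_cases j <;>
      simp [ptr2, proj4, sig2', tens, e₀, e₁, tau0, tau1, redMat, Fin.sum_univ_two,
        Complex.conj_ofReal, Complex.ofReal_div, -Complex.ofReal_cos, -Complex.ofReal_sin] <;>
      first
        | linear_combination ((Real.cos (θ/2) : ℂ)^2 + (Real.sin (θ/2) : ℂ)^2) * hk2
            + (1/2 : ℂ) * hpy
        | linear_combination (2 * (Real.sin (θ/2) : ℂ) * (Real.cos (θ/2) : ℂ)) * hk2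
            - (1/2 : ℂ) * hdb
  · apply Polynomial.funext
    intro x
    rw [Matrix.charpoly, Matrix.det_fin_two]
    simp [Matrix.charmatrix, redMat, Matrix.det_fin_two]
    ring
  · rintro ⟨a, b, h⟩
    have h00 := congrFun h (0, 0)
    have h01 := congrFun h (0, 1)
    have h10 := congrFun h (1, 0)
    have h11 := congrFun h (1, 1)
    simp [sig1', tens, e₀, e₁, tau0, tau1, -Complex.ofReal_cos, -Complex.ofReal_sin] at h00 h01 h10 h11
    exact hent a b h00.symm h01.symm h10.symm h11.symm
  · rintro ⟨a, b, h⟩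
    have h00 := congrFun h (0, 0)
    have h01 := congrFun h (0, 1)
    have h10 := congrFun h (1, 0)
    have h11 := congrFun h (1, 1)
    simp [sig2', tens, e₀, e₁, tau0, tau1, -Complex.ofReal_cos, -Complex.ofReal_sin] at h00 h01 h10 h11
    exact hent a ![b 1, b 0] (by simpa using h01.symm) (by simpa using h00.symm)
      (by simpa using h11.symm) (by simpa using h10.symm)


end
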